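/- arXiv:2603.25079 — 2 statements merged into one kernel-verified Lean document; each statement's English description precedes it below -/
import Mathlib

section
/- Let A be an algebra over a field satisfying the δ-Novikov identities δ(xy)z − x(yz) = δ(yx)z − y(xz) and (xy)z = (xz)y for some scalar δ. Then the algebra A⁻ with product [x,y] := (1/2)(xy − yx) is a Lie algebra. -/
/-- The unscaled Jacobi identity for the commutator of a δ-Novikov product. -/
theorem novikov_key {K A : Type*} [Field K] [AddCommGroup A] [Module K A]
    (m : A →ₗ[K] A →ₗ[K] A) (δ : K)
    (h1 : ∀ x y z : A, δ • m (m x y) z - m x (m y z) = δ • m (m y x) z - m y (m x z))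
    (h2 : ∀ x y z : A, m (m x y) z = m (m x z) y)
    (x y z : A) :
    (m x (m y z) - m x (m z y) - (m (m y z) x - m (m z y) x))
    + (m y (m z x) - m y (m x z) - (m (m z x) y - m (m x z) y))
    + (m z (m x y) - m z (m y x) - (m (m x y) z - m (m y x) z)) = 0 := by
  linear_combination (norm := module) (-1 : K) • h1 x y z + (-1 : K) • h1 y z x
    + (-1 : K) • h1 z x y + (δ - 1) • h2 x y z + (δ - 1) • h2 y z x + (δ - 1) • h2 z x y

/-- the commutator algebra of a δ-Novikov algebra is a Lie algebra. -/
theorem stmt_0 {K A : Type*} [Field K] [AddCommGroup A] [Module K A]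
    (m : A →ₗ[K] A →ₗ[K] A) (δ : K)
    (h1 : ∀ x y z : A, δ • m (m x y) z - m x (m y z) = δ • m (m y x) z - m y (m x z))
    (h2 : ∀ x y z : A, m (m x y) z = m (m x z) y)
    (br : A → A → A) (hbr : ∀ x y, br x y = (2 : K)⁻¹ • (m x y - m y x)) :
    (∀ x, br x x = 0) ∧
    (∀ x y, br x y = - br y x) ∧
    (∀ x y z, br x (br y z) + br y (br z x) + br z (br x y) = 0) := by
  refine ⟨fun x => by simp [hbr], fun x y => by rw [hbr, hbr]; module, fun x y z => ?_⟩
  simp only [hbr, map_sub, map_smul, LinearMap.sub_apply, LinearMap.smul_apply]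
  linear_combination (norm := module) ((2 : K)⁻¹ * (2 : K)⁻¹) • novikov_key m δ h1 h2 x y z
end

section
/- For α, β ∈ ℂ, the 3-dimensional algebras N₀₂^α and N₀₂^β (with products e₁·e₁ = e₃, e₁·e₂ = e₃, e₂·e₁ = −e₃, e₂·e₂ = α e₃ resp. β e₃) are isomorphic if and only if α = β. -/
/-- Multiplication of N₀₂^γ on ℂ³: e₁e₁ = e₃, e₁e₂ = e₃, e₂e₁ = −e₃, e₂e₂ = γ e₃. -/
noncomputable def mulN02 (γ : ℂ) (x y : Fin 3 → ℂ) : Fin 3 → ℂ :=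
  ![0, 0, x 0 * y 0 + x 0 * y 1 - x 1 * y 0 + γ * (x 1 * y 1)]

/-- N₀₂^α ≅ N₀₂^β if and only if α = β. -/
theorem stmt_10 (α β : ℂ) :
    (∃ φ : (Fin 3 → ℂ) ≃ₗ[ℂ] (Fin 3 → ℂ),
      ∀ x y, φ (mulN02 α x y) = mulN02 β (φ x) (φ y)) ↔ α = β := by
  constructor
  · rintro ⟨φ, hφ⟩
    set e1 : Fin 3 → ℂ := ![1,0,0] with he1
    set e2 : Fin 3 → ℂ := ![0,1,0] with he2
    set e3 : Fin 3 → ℂ := ![0,0,1] with he3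
    set a := φ e1 0 with ha
    set b := φ e1 1 with hb
    set c := φ e2 0 with hc
    set d := φ e2 1 with hd
    have m11 : mulN02 α e1 e1 = e3 := by
      ext i; fin_cases i <;> simp [mulN02, he1, he3]
    have m12 : mulN02 α e1 e2 = e3 := by
      ext i; fin_cases i <;> simp [mulN02, he1, he2, he3]
    have m21 : mulN02 α e2 e1 = -e3 := by
      ext i; fin_cases i <;> simp [mulN02, he1, he2, he3]
    have m22 : mulN02 α e2 e2 = α • e3 := by
      ext i; fin_cases i <;> simp [mulN02, he2, he3]
    have h11 := hφ e1 e1; rw [m11] at h11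
    have h12 := hφ e1 e2; rw [m12] at h12
    have h21 := hφ e2 e1; rw [m21, map_neg] at h21
    have h22 := hφ e2 e2; rw [m22, map_smul] at h22
    set k := φ e3 2 with hk
    have hk0 : φ e3 0 = 0 := by rw [h11]; simp [mulN02]
    have hk1 : φ e3 1 = 0 := by rw [h11]; simp [mulN02]
    have e1k : a*a + a*b - b*a + β*(b*b) = k := by
      rw [hk, h11]; simp [mulN02]; rfl
    have e2k : a*c + a*d - b*c + β*(b*d) = k := by
      rw [hk, h12]; simp [mulN02]; rfl
    have e3k : c*a + c*b - d*a + β*(d*b) = -k := by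
      have h := congrFun h21 2
      simp [mulN02] at h
      linear_combination -h
    have e4k : α * k = c*c + c*d - d*c + β*(d*d) := by
      have := congrFun h22 2
      simpa [mulN02] using this
    have hkne : k ≠ 0 := by
      intro h
      have hz : e3 = 0 := by
        apply φ.injective
        ext i
        fin_cases i <;> simp [hk0, hk1, ← hk, h]
      have := congrFun hz 2
      simp [he3] at this
    have hs : a*c + β*(b*d) = 0 := by linear_combination (e2k + e3k)/2
    have ht : a*d - b*c = k := by linear_combination (e2k - e3k)/2
    have key : α * k^2 = β * k^2 := by
      linear_combination (a*c + β*(b*d)) * hs + (β*(a*d - b*c - k) + 2*β*k) * ht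
        - (c*c + β*(d*d)) * e1k + k * e4k
    exact mul_right_cancel₀ (pow_ne_zero 2 hkne) key
  · rintro rfl
    exact ⟨LinearEquiv.refl ℂ _, fun x y => rfl⟩
end
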